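/- arXiv:2103.01326 — 3 statements merged into one kernel-verified Lean document; each statement's English description precedes it below -/
import Mathlib

section
/- Let k be a field, A a finite-dimensional k-algebra, and t : A → k a k-linear map satisfying t(ab) = t(ba) for all a, b ∈ A. Suppose the bilinear form ⟨a,b⟩ = t(ab) is nondegenerate and anisotropic (i.e. t(a²) = 0 implies a = 0). Then A is a semisimple ring. -/
theorem stmt6 {k A : Type*} [Field k] [Ring A] [Algebra k A]
    [FiniteDimensional k A] (t : A →ₗ[k] k)
    (htr : ∀ a b : A, t (a * b) = t (b * a))
    (hnd : ∀ a : A, (∀ b : A, t (a * b) = 0) → a = 0)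
    (han : ∀ a : A, t (a * a) = 0 → a = 0) :
    IsSemisimpleRing A := by
  -- the trace bilinear form
  set B : LinearMap.BilinForm k A := (LinearMap.mul k A).compr₂ t with hB
  have hBapp : ∀ a b : A, B a b = t (a * b) := fun a b => rfl
  have hrefl : B.IsRefl := by
    intro a b h
    rw [hBapp] at h ⊢
    rw [htr]; exact h
  refine (isSemisimpleModule_iff A A).mpr ⟨?_⟩
  intro I
  -- the underlying k-subspace of the left ideal I
  set W : Submodule k A := I.restrictScalars k with hW
  have hdisj : Disjoint W (B.orthogonal W) := by
    rw [Submodule.disjoint_def]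
    intro x hxW hxO
    exact han x (hxO x hxW)
  have hcompl : IsCompl W (B.orthogonal W) :=
    (LinearMap.BilinForm.isCompl_orthogonal_iff_disjoint hrefl).mpr hdisj
  -- write 1 = e + f with e ∈ I, f ⊥ I
  obtain ⟨e, heW, f, hfO, hef⟩ :=
    Submodule.mem_sup.mp (hcompl.codisjoint.eq_top ▸ Submodule.mem_top :
      (1 : A) ∈ W ⊔ B.orthogonal W)
  have heI : e ∈ I := heW
  -- every x ∈ I satisfies x * e = x
  have hxe : ∀ x ∈ I, x * e = x := by
    intro x hxI
    have hxf : x * f ∈ B.orthogonal W := by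
      intro n hnW
      have : t (n * (x * f)) = t ((n * x) * f) := by rw [mul_assoc]
      rw [hBapp, this]
      have hnx : n * x ∈ I := by simpa [smul_eq_mul] using I.smul_mem n hxI
      exact hfO (n * x) hnx
    have hxfI : x * f ∈ W := by
      have h1 : x * e ∈ I := I.smul_mem x heI
      have h2 : x * f = x - x * e := by
        have : x * (e + f) = x := by rw [hef, mul_one]
        rw [mul_add] at this
        linear_combination (norm := noncomm_ring) this
      rw [h2]
      exact Submodule.sub_mem W hxI h1
    have : x * f = 0 := Submodule.disjoint_def.mp hdisj _ hxfI hxf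
    have h3 : x * (e + f) = x := by rw [hef, mul_one]
    rw [mul_add, this, add_zero] at h3
    exact h3
  have hee : e * e = e := hxe e heI
  -- the complement left ideal
  refine ⟨Submodule.span A {1 - e}, ?_, ?_⟩
  · rw [Submodule.disjoint_def]
    intro x hxI hxJ
    obtain ⟨a, ha⟩ := Submodule.mem_span_singleton.mp hxJ
    have hxe' := hxe x hxI
    rw [← ha] at hxe' ⊢
    rw [smul_eq_mul] at hxe' ⊢
    rw [mul_assoc, sub_mul, one_mul, hee, sub_self, mul_zero] at hxe'
    exact hxe'.symm
  · rw [codisjoint_iff, eq_top_iff]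
    intro x _
    have h1 : x = x * e + x * (1 - e) := by noncomm_ring
    rw [h1]
    exact Submodule.add_mem _
      (Submodule.mem_sup_left (I.smul_mem x heI))
      (Submodule.mem_sup_right (Submodule.mem_span_singleton.mpr ⟨x, rfl⟩))
end

section
/- Let K be a field and let V, M, N be K-vector spaces with a K-bilinear map π : V × M → N. Suppose that for every nonzero v ∈ V there exist a linear map φ : N → M and a linear functional ψ : V → K such that ψ(v) = 1 and φ(π(u, m)) = ψ(u)·m for all u ∈ V and m ∈ M. Then the induced linear map V ⊗_K M → N is injective. -/
open TensorProduct

theorem stmt7 {K V M N : Type*} [Field K]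
    [AddCommGroup V] [Module K V] [AddCommGroup M] [Module K M]
    [AddCommGroup N] [Module K N]
    (π : V →ₗ[K] M →ₗ[K] N)
    (h : ∀ v : V, v ≠ 0 → ∃ (φ : N →ₗ[K] M) (ψ : V →ₗ[K] K),
      ψ v = 1 ∧ ∀ (u : V) (m : M), φ (π u m) = ψ u • m) :
    Function.Injective (TensorProduct.lift π) := by
  rw [injective_iff_map_eq_zero]
  intro x hx
  classical
  let 𝒞 := Module.Basis.ofVectorSpace K M
  obtain ⟨b, rfl⟩ := TensorProduct.eq_repr_basis_right 𝒞 (x := x)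
  by_contra hne
  have hb : b ≠ 0 := by rintro rfl; simp [Finsupp.sum_zero_index] at hne
  obtain ⟨i₀, hi₀⟩ := Finsupp.ne_iff.mp hb
  simp only [Finsupp.coe_zero, Pi.zero_apply] at hi₀
  obtain ⟨φ, ψ, hψ, hφ⟩ := h (b i₀) hi₀
  have h0 : φ (TensorProduct.lift π (b.sum fun i m ↦ m ⊗ₜ 𝒞 i)) = 0 := by
    rw [hx, map_zero]
  rw [map_finsuppSum, map_finsuppSum] at h0
  simp only [TensorProduct.lift.tmul, hφ] at h0
  have h1 := congrArg (fun y => 𝒞.repr y i₀) h0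
  simp only [map_zero, Finsupp.coe_zero, Pi.zero_apply] at h1
  rw [map_finsuppSum, Finsupp.sum_apply] at h1
  simp only [map_smul, Module.Basis.repr_self, Finsupp.smul_single, smul_eq_mul, mul_one] at h1
  rw [Finsupp.sum_eq_single i₀ (fun i _ hi => by rw [Finsupp.single_eq_of_ne' hi])
    (fun _ => by simp) ] at h1
  rw [Finsupp.single_eq_same, hψ] at h1
  exact one_ne_zero h1
end

section
/- Let k be a field and A a finite-dimensional commutative k-algebra with a linear map t : A → k such that the bilinear form ⟨a,b⟩ = t(ab) is nondegenerate and anisotropic. Then A is a semisimple ring, and in fact A is a finite product of field extensions of k. -/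
universe u v

/-- `Equiv.piCongrLeft` as an `AlgEquiv`. -/
noncomputable def algEquivPiCongrLeftAux {k : Type*} [CommSemiring k] {ι ι' : Type*}
    (e : ι ≃ ι') (K : ι' → Type*) [∀ i, Semiring (K i)] [∀ i, Algebra k (K i)] :
    (∀ i, K (e i)) ≃ₐ[k] ∀ i, K i :=
  AlgEquiv.ofRingEquiv (f := RingEquiv.piCongrLeft K e) fun r => funext fun i' => by
    obtain ⟨i, rfl⟩ := e.surjective i'
    exact (Equiv.piCongrLeft_apply_apply K e _ i).trans rfl

theorem stmt16 {k : Type u} {A : Type v} [Field k] [CommRing A] [Algebra k A]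
    [FiniteDimensional k A] (t : A →ₗ[k] k)
    (hnd : ∀ a : A, (∀ b : A, t (a * b) = 0) → a = 0)
    (han : ∀ a : A, t (a * a) = 0 → a = 0) :
    IsSemisimpleRing A ∧
      ∃ (n : ℕ) (K : Fin n → Type (max u v)) (_ : ∀ i, Field (K i))
        (_ : ∀ i, Algebra k (K i)),
        Nonempty (A ≃ₐ[k] ∀ i, K i) := by
  -- A is reduced
  have hred : IsReduced A := (isReduced_iff_pow_one_lt 2 one_lt_two).2 fun x hx =>
    han x (by rw [← pow_two, hx, map_zero])
  -- A is Artinian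
  have hart : IsArtinianRing A := isArtinian_of_tower k inferInstance
  refine ⟨IsArtinianRing.isSemisimpleRing_of_isReduced A, ?_⟩
  -- index the maximal ideals
  haveI : Finite {I : Ideal A | I.IsMaximal} := (IsArtinianRing.setOfPred_isMaximal_finite A).to_subtype
  set S := {I : Ideal A | I.IsMaximal} with hS
  let e : Fin (Nat.card S) ≃ S := (Finite.equivFin S).symm
  -- the natural k-algebra map to the product of quotients
  let φ : A →ₐ[k] ∀ I : S, A ⧸ (I : Ideal A) :=
    Pi.algHom _ _ fun I => Ideal.Quotient.mkₐ k _
  have hφ : Function.Bijective φ := by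
    constructor
    · rw [injective_iff_map_eq_zero]
      intro a ha
      have hmem : ∀ I : Ideal A, I.IsPrime → a ∈ I := by
        intro I hI
        have hIm : I.IsMaximal := (IsArtinianRing.isPrime_iff_isMaximal I).mp hI
        have h2 : (Ideal.Quotient.mk I) a = 0 := congrFun ha ⟨I, hIm⟩
        exact (Ideal.Quotient.eq_zero_iff_mem).mp h2
      have : IsNilpotent a := (nilpotent_iff_mem_prime).mpr fun J hJ => hmem J hJ
      exact IsReduced.eq_zero a this
    · intro g
      have hco : Pairwise (Function.onFun IsCoprime fun I : S => (I : Ideal A)) := fun I J h =>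
        Ideal.isCoprime_iff_sup_eq.mpr <| I.2.coprime_of_ne J.2 <| by
          rwa [Ne, Subtype.coe_inj]
      obtain ⟨b, hb⟩ := Ideal.quotientInfToPiQuotient_surj hco g
      obtain ⟨a, rfl⟩ := Ideal.Quotient.mk_surjective b
      refine ⟨a, ?_⟩
      rw [← hb, Ideal.quotientInfToPiQuotient_mk]
      rfl
  -- the first equivalence
  let ψ1 : A ≃ₐ[k] ∀ I : S, A ⧸ (I : Ideal A) := AlgEquiv.ofBijective φ hφ
  -- lift each factor
  let upAlg : ∀ I : S, (A ⧸ (I : Ideal A)) ≃ₐ[k] ULift.{u} (A ⧸ (I : Ideal A)) := fun I =>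
    AlgEquiv.ofRingEquiv (f := (ULift.ringEquiv).symm) fun r => rfl
  let ψ2 := AlgEquiv.piCongrRight upAlg
  -- reindex
  let ψ3 := (algEquivPiCongrLeftAux (k := k) e fun I : S => ULift.{u} (A ⧸ (I : Ideal A))).symm
  have hmax : ∀ i : Fin (Nat.card S), ((e i : S) : Ideal A).IsMaximal := fun i => (e i).2
  exact ⟨Nat.card S, fun i => ULift.{u} (A ⧸ ((e i : S) : Ideal A)),
    fun i => letI := hmax i; letI := Ideal.Quotient.field ((e i : S) : Ideal A); ULift.field,
    fun i => inferInstance, ⟨(ψ1.trans ψ2).trans ψ3⟩⟩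
end
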